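/- Let R > 0 and let t, τ, θ, ω, x, y, v_x, v_y be real numbers. Set v_t = v_x sin θ − v_y cos θ and v_⊥ = −(v_x cos θ + v_y sin θ), and assume v_⊥ ≠ 0 and R ω ≠ v_t. Then the two vectors in ℝ⁴, r₁ = ((ω − v_t/R)/v_⊥)·(cos θ, sin θ, τ cos θ, τ sin θ) + ((t − τ)/R²)·(−v_y, v_x, y, −x) and r₂ = (1/R²)·(−v_y, v_x, y, −x), are linearly independent; that is, the 2 × 4 derivative matrix of the map taking the particle's initial condition to the disk's angular position and angular velocity at time t has rank 2 away from the set where R ω = v_t. -/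

import Mathlib

/-- Away from the degenerate set `R ω = v_t`, the two gradient vectors of the disk's
angular position and angular velocity at time `t`, with respect to the particle's initial
data `(x, y, v_x, v_y)`, are linearly independent; i.e. the `2 × 4` derivative matrix has
rank `2`. -/
theorem gradient_vectors_linearIndependent (R t τ θ ω x y vx vy : ℝ) (hR : 0 < R)
    (hperp : -(vx * Real.cos θ + vy * Real.sin θ) ≠ 0)
    (hω : R * ω ≠ vx * Real.sin θ - vy * Real.cos θ) :
    let vt := vx * Real.sin θ - vy * Real.cos θ
    let vperp := -(vx * Real.cos θ + vy * Real.sin θ)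
    let r₁ : Fin 4 → ℝ := fun i =>
      ((ω - vt / R) / vperp) *
          (![Real.cos θ, Real.sin θ, τ * Real.cos θ, τ * Real.sin θ] i) +
        ((t - τ) / R ^ 2) * (![-vy, vx, y, -x] i)
    let r₂ : Fin 4 → ℝ := fun i => (1 / R ^ 2) * (![-vy, vx, y, -x] i)
    LinearIndependent ℝ ![r₁, r₂] := by
  intro vt vperp r₁ r₂
  rw [LinearIndependent.pair_iff]
  intro a b hab
  have h0 : a * r₁ 0 + b * r₂ 0 = 0 := by
    have := congrFun hab 0; simpa using this
  have h1 : a * r₁ 1 + b * r₂ 1 = 0 := by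
    have := congrFun hab 1; simpa using this
  have hR0 : R ≠ 0 := ne_of_gt hR
  have hc : (ω - vt / R) / vperp ≠ 0 := by
    apply div_ne_zero _ hperp
    intro h
    apply hω
    have : ω = vt / R := by linarith
    rw [this]; simp only [vt]; field_simp
  set c : ℝ := (ω - vt / R) / vperp with hcdef
  set d : ℝ := (t - τ) / R ^ 2 with hddef
  simp only [r₁, r₂, Matrix.cons_val_zero, Matrix.cons_val_one, Matrix.head_cons] at h0 h1
  rw [← hcdef, ← hddef] at h0 h1
  set E : ℝ := a * d + b * (1 / R ^ 2) with hEdef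
  have hs := Real.sin_sq_add_cos_sq θ
  have key1 : a * c + E * (vx * Real.sin θ - vy * Real.cos θ) = 0 := by
    linear_combination Real.cos θ * h0 + Real.sin θ * h1 - (a * c) * hs +
      (vx * Real.sin θ - vy * Real.cos θ) * hEdef
  have key2 : E * (vx * Real.cos θ + vy * Real.sin θ) = 0 := by
    linear_combination Real.cos θ * h1 - Real.sin θ * h0 +
      (vx * Real.cos θ + vy * Real.sin θ) * hEdef
  have hE : E = 0 := by
    rcases mul_eq_zero.mp key2 with h | h
    · exact h
    · exact absurd (by simpa using neg_eq_zero.mpr h) hperp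
  have ha : a = 0 := by
    rw [hE] at key1
    have : a * c = 0 := by linarith
    rcases mul_eq_zero.mp this with h | h
    · exact h
    · exact absurd h hc
  refine ⟨ha, ?_⟩
  have hb : b * (1 / R ^ 2) = 0 := by rw [hEdef, ha] at hE; linarith
  rcases mul_eq_zero.mp hb with h | h
  · exact h
  · exact absurd h (by positivity)
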